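/- A continuous-time simple symmetric random walk Z_t on the integers started at 0, run independently of two rate-1 Poisson processes X_t and Y_t, satisfies: with positive probability, −1 − X_t < Z_t < 1 + Y_t for all t ≥ 0. (That is, a rate-2 nearest-neighbor symmetric walk stays strictly between two linearly receding boundaries forever with positive probability.) -/

import Mathlib

open MeasureTheory ProbabilityTheory Filter
open scoped NNReal ENNReal

/-- `X` is a rate-`r` Poisson (counting) process on `[0,∞)`. -/
def IsPoissonProcess {Ω : Type*} [MeasurableSpace Ω] (μ : Measure Ω)
    (X : ℝ → Ω → ℕ) (r : ℝ≥0) : Prop :=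
  (∀ ω, X 0 ω = 0) ∧
  (∀ ω, ∀ s t : ℝ, 0 ≤ s → s ≤ t → X s ω ≤ X t ω) ∧
  (∀ t : ℝ, 0 ≤ t → Measurable (X t)) ∧
  (∀ s t : ℝ, 0 ≤ s → s ≤ t →
    Measure.map (fun ω => X t ω - X s ω) μ = poissonMeasure (r * (t - s).toNNReal)) ∧
  (∀ (u : ℕ → ℝ), u 0 = 0 → Monotone u →
    iIndepFun (fun i ω => X (u (i + 1)) ω - X (u i) ω) μ)

section Aux

open Real Finset

lemma poisson_ztail (r : ℝ≥0) (z : ℝ) (hz : 0 < z) (m : ℕ) (s : Set ℕ)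
    (hs : ∀ k ∈ s, z ^ m ≤ z ^ k) :
    poissonMeasure r s ≤ ENNReal.ofReal (Real.exp (r * (z - 1)) / z ^ m) := by
  have hsum : HasSum (fun k => z ^ k * poissonPMFReal r k) (Real.exp (r * (z - 1))) := by
    have h1 : HasSum (fun k => (z * r) ^ k / (Nat.factorial k : ℝ)) (Real.exp (z * r)) := by
      rw [exp_eq_exp_ℝ]; exact NormedSpace.expSeries_div_hasSum_exp (z * r)
    have h2 := h1.mul_left (Real.exp (-r))
    have : (fun k => Real.exp (-r) * ((z * r) ^ k / (Nat.factorial k : ℝ)))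
        = fun k => z ^ k * poissonPMFReal r k := by
      funext k
      simp [poissonPMFReal, mul_pow]
      ring
    rw [this] at h2
    rw [show rexp (r * (z - 1)) = rexp (-r) * rexp (z * r) by rw [← Real.exp_add]; ring_nf]
    exact h2
  have hsummable : Summable (fun k => z ^ k * poissonPMFReal r k) := hsum.summable
  have hnonneg : ∀ k, 0 ≤ z ^ k * poissonPMFReal r k := fun k =>
    mul_nonneg (pow_nonneg hz.le k) poissonPMFReal_nonneg
  have hms : MeasurableSet s := s.to_countable.measurableSet
  have hPM : poissonMeasure r s = ∑' k, s.indicator (⇑(poissonPMF r)) k := by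
    classical
    rw [poissonMeasure, Measure.sum_apply _ hms]
    congr 1; funext k
    rw [Measure.smul_apply, Measure.dirac_apply' _ hms, smul_eq_mul, Set.indicator_apply,
      Set.indicator_apply]
    split_ifs <;> simp [← poissonPMFReal_ofReal_eq_poissonPMF, poissonPMFReal]
  rw [hPM]
  have hle : ∀ k : ℕ, s.indicator (⇑(poissonPMF r)) k
      ≤ ENNReal.ofReal (z ^ k * poissonPMFReal r k / z ^ m) := by
    intro k
    by_cases hk : k ∈ s
    · rw [Set.indicator_of_mem hk]
      show ENNReal.ofReal (poissonPMFReal r k) ≤ _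
      apply ENNReal.ofReal_le_ofReal
      rw [le_div_iff₀ (pow_pos hz m)]
      calc poissonPMFReal r k * z ^ m ≤ poissonPMFReal r k * z ^ k := by
            exact mul_le_mul_of_nonneg_left (hs k hk) poissonPMFReal_nonneg
        _ = z ^ k * poissonPMFReal r k := mul_comm _ _
    · rw [Set.indicator_of_notMem hk]; exact zero_le
  calc ∑' k, s.indicator (⇑(poissonPMF r)) k
      ≤ ∑' k, ENNReal.ofReal (z ^ k * poissonPMFReal r k / z ^ m) := ENNReal.tsum_le_tsum hle
    _ = ENNReal.ofReal (∑' k, z ^ k * poissonPMFReal r k / z ^ m) := by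
        rw [ENNReal.ofReal_tsum_of_nonneg]
        · intro k; exact div_nonneg (hnonneg k) (pow_nonneg hz.le m)
        · exact hsummable.div_const _
    _ = ENNReal.ofReal (Real.exp (r * (z - 1)) / z ^ m) := by
        rw [tsum_div_const, hsum.tsum_eq]

lemma sum_pow_card_powerset {α : Type*} [DecidableEq α] (R : Finset α) (x : ℝ) :
    ∑ s ∈ R.powerset, x ^ s.card = (x + 1) ^ R.card := by
  rw [Finset.sum_powerset]
  have : ∀ u ∈ Finset.range (R.card + 1),
      ∑ s ∈ Finset.powersetCard u R, x ^ s.card = (R.card.choose u : ℝ) * x ^ u := by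
    intro u _
    rw [Finset.sum_congr rfl (fun s hs => by
      rw [(Finset.mem_powersetCard.mp hs).2]), Finset.sum_const, nsmul_eq_mul,
      Finset.card_powersetCard]
  rw [Finset.sum_congr rfl this, add_pow]
  exact Finset.sum_congr rfl fun u _ => by ring

lemma walk_count (j c : ℕ) (z : ℝ) (hz : 1 < z) :
    ((Finset.filter (fun s => (c : ℤ) ≤ |2 * (s.card : ℤ) - j|)
        (Finset.powerset (Finset.range j))).card : ℝ) * (1/2) ^ j
      ≤ 2 * ((z^2+1)/(2*z)) ^ j / z ^ c := by
  have hz0 : (0:ℝ) < z := lt_trans one_pos hz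
  set t1 : Finset ℕ → ℝ := fun s => (z^2) ^ s.card / (z ^ j * z ^ c) with ht1
  set t2 : Finset ℕ → ℝ := fun s => (z^2)⁻¹ ^ s.card * z ^ j / z ^ c with ht2
  have key : ((Finset.filter (fun s => (c : ℤ) ≤ |2 * (s.card : ℤ) - j|)
      (Finset.powerset (Finset.range j))).card : ℝ)
      ≤ ∑ s ∈ Finset.powerset (Finset.range j), (t1 s + t2 s) := by
    have hcast : ((Finset.filter (fun s => (c : ℤ) ≤ |2 * (s.card : ℤ) - j|)
        (Finset.powerset (Finset.range j))).card : ℝ)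
        = ∑ _s ∈ Finset.filter (fun s => (c : ℤ) ≤ |2 * (s.card : ℤ) - j|)
          (Finset.powerset (Finset.range j)), (1:ℝ) := by
      rw [Finset.sum_const]; simp
    rw [hcast]
    rw [← Finset.sum_filter_add_sum_filter_not (Finset.powerset (Finset.range j))
      (fun s => (c : ℤ) ≤ |2 * (s.card : ℤ) - j|) (fun s => t1 s + t2 s)]
    have h2 : (0:ℝ) ≤ ∑ s ∈ Finset.filter (fun s => ¬ ((c : ℤ) ≤ |2 * (s.card : ℤ) - j|))
        (Finset.powerset (Finset.range j)), (t1 s + t2 s) := by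
      apply Finset.sum_nonneg; intro s _
      have h1 : (0:ℝ) ≤ t1 s := by rw [ht1]; positivity
      have h2 : (0:ℝ) ≤ t2 s := by rw [ht2]; positivity
      linarith
    have h1 : ∀ s ∈ Finset.filter (fun s => (c : ℤ) ≤ |2 * (s.card : ℤ) - j|)
        (Finset.powerset (Finset.range j)), (1:ℝ) ≤ t1 s + t2 s := by
      intro s hs
      obtain ⟨_, habs⟩ := Finset.mem_filter.mp hs
      have h2' : (0:ℝ) ≤ t2 s := by rw [ht2]; positivity
      have h1' : (0:ℝ) ≤ t1 s := by rw [ht1]; positivity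
      rcases abs_cases (2 * (s.card : ℤ) - j) with ⟨heq, _⟩ | ⟨heq, _⟩
      · have hjc : j + c ≤ 2 * s.card := by omega
        have ht : (1:ℝ) ≤ t1 s := by
          show (1:ℝ) ≤ (z^2) ^ s.card / (z ^ j * z ^ c)
          rw [one_le_div (by positivity)]
          calc z ^ j * z ^ c = z ^ (j + c) := (pow_add z j c).symm
            _ ≤ z ^ (2 * s.card) := pow_le_pow_right₀ hz.le hjc
            _ = (z^2) ^ s.card := by rw [← pow_mul, Nat.mul_comm]
        linarith
      · have hjc : 2 * s.card + c ≤ j := by omega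
        have ht : (1:ℝ) ≤ t2 s := by
          have hinv : ((z^2)⁻¹:ℝ) ^ s.card = (z ^ (2*s.card))⁻¹ := by
            rw [inv_pow, ← pow_mul]
          show (1:ℝ) ≤ (z^2)⁻¹ ^ s.card * z ^ j / z ^ c
          rw [hinv, inv_mul_eq_div, div_div, one_le_div (by positivity)]
          calc z ^ (2*s.card) * z ^ c = z ^ (2 * s.card + c) := (pow_add z _ _).symm
            _ ≤ z ^ j := pow_le_pow_right₀ hz.le hjc
        linarith
    calc (∑ _s ∈ Finset.filter (fun s => (c : ℤ) ≤ |2 * (s.card : ℤ) - j|)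
          (Finset.powerset (Finset.range j)), (1:ℝ))
        ≤ ∑ s ∈ Finset.filter (fun s => (c : ℤ) ≤ |2 * (s.card : ℤ) - j|)
          (Finset.powerset (Finset.range j)), (t1 s + t2 s) := Finset.sum_le_sum h1
      _ ≤ _ := le_add_of_nonneg_right h2
  have hsum : ∑ s ∈ Finset.powerset (Finset.range j), (t1 s + t2 s)
      = 2 * (z^2+1) ^ j / (z ^ j * z ^ c) := by
    rw [Finset.sum_add_distrib]
    have e1 : ∑ s ∈ Finset.powerset (Finset.range j), t1 s
        = (z^2+1) ^ j / (z ^ j * z ^ c) := by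
      rw [ht1, ← Finset.sum_div, sum_pow_card_powerset, Finset.card_range]
    have e2 : ∑ s ∈ Finset.powerset (Finset.range j), t2 s
        = ((z^2)⁻¹+1) ^ j * z ^ j / z ^ c := by
      rw [ht2]
      rw [show (fun s : Finset ℕ => (z^2)⁻¹ ^ s.card * z ^ j / z ^ c)
        = fun s : Finset ℕ => (z^2)⁻¹ ^ s.card * (z ^ j / z ^ c) from by
          funext s; ring]
      rw [← Finset.sum_mul, sum_pow_card_powerset, Finset.card_range]
      ring
    rw [e1, e2]
    have hzne : z ≠ 0 := ne_of_gt hz0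
    have : ((z^2)⁻¹+1) ^ j * z ^ j = (z^2+1) ^ j / z ^ j := by
      rw [eq_div_iff (pow_ne_zero j hzne), mul_assoc, ← mul_pow, ← mul_pow]
      congr 1
      field_simp
      ring
    rw [this]
    ring
  have hfinal : (∑ s ∈ Finset.powerset (Finset.range j), (t1 s + t2 s)) * (1/2) ^ j
      = 2 * ((z^2+1)/(2*z)) ^ j / z ^ c := by
    have hzne : z ≠ 0 := ne_of_gt hz0
    rw [hsum, div_pow, div_pow, mul_pow, one_pow]
    field_simp
  calc _ ≤ (∑ s ∈ Finset.powerset (Finset.range j), (t1 s + t2 s)) * (1/2) ^ j := by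
        apply mul_le_mul_of_nonneg_right key (by positivity)
    _ = _ := hfinal

noncomputable def Wb (n : ℕ) : ℝ :=
  Real.exp ((2*Real.exp 1 - 8) * (n+1))
  + 2 * Real.exp ((Real.exp (-1) - 1/2) * n)
  + 12 * (n+1) * ((221:ℝ)/220) ^ (6*(n+1)) * (Real.sqrt (10/11)) ^ (n-1)

lemma Wb_nonneg (n : ℕ) : 0 ≤ Wb n := by
  unfold Wb; positivity

lemma summable_Wb : Summable Wb := by
  apply Summable.add
  apply Summable.add
  · -- geometric exp((2e-8)(n+1))
    have h : ∀ n : ℕ, Real.exp ((2*Real.exp 1 - 8) * (n+1))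
        = Real.exp (2*Real.exp 1 - 8) * Real.exp (2*Real.exp 1 - 8) ^ n := by
      intro n
      rw [← Real.exp_nat_mul]
      rw [← Real.exp_add]
      ring_nf
    simp_rw [h]
    apply Summable.mul_left
    apply summable_geometric_of_lt_one (Real.exp_nonneg _)
    rw [Real.exp_lt_one_iff]
    have := Real.exp_one_lt_d9
    linarith
  · have h : ∀ n : ℕ, 2 * Real.exp ((Real.exp (-1) - 1/2) * n)
        = 2 * Real.exp (Real.exp (-1) - 1/2) ^ n := by
      intro n; rw [← Real.exp_nat_mul]; ring_nf
    simp_rw [h]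
    apply Summable.mul_left
    apply summable_geometric_of_lt_one (Real.exp_nonneg _)
    rw [Real.exp_lt_one_iff]
    have h1 : Real.exp (-1) < 1/2 := by
      rw [Real.exp_neg]
      rw [inv_lt_comm₀ (by positivity) (by norm_num)]
      have := Real.exp_one_gt_d9
      linarith
    linarith
  · -- 12 (n+1) q^(n+1) v^(n-1)
    set q : ℝ := ((221:ℝ)/220) ^ 6 with hq
    set v : ℝ := Real.sqrt (10/11) with hv
    have hv0 : 0 < v := Real.sqrt_pos.mpr (by norm_num)
    have hv1 : v ≤ 21/22 := by
      rw [hv, show (10/11 : ℝ) = (10/11 : ℝ) from rfl]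
      have : (10/11 : ℝ) ≤ (21/22)^2 := by norm_num
      calc Real.sqrt (10/11) ≤ Real.sqrt ((21/22)^2) := Real.sqrt_le_sqrt this
        _ = 21/22 := Real.sqrt_sq (by norm_num)
    have hqv : q * v < 1 := by
      calc q * v ≤ ((221:ℝ)/220)^6 * (21/22) := by
            apply mul_le_mul_of_nonneg_left hv1 (by positivity)
        _ < 1 := by norm_num
    have hqv0 : 0 ≤ q * v := by positivity
    apply Summable.of_nonneg_of_le (fun n => by positivity)
      (f := fun n : ℕ => (12 * q / v) * (((n:ℝ)+1) * (q*v)^n))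
    · intro n
      have hbase : ((221:ℝ)/220) ^ (6*(n+1)) = q ^ (n+1) := by
        rw [hq, ← pow_mul]
      have hvpow : v ^ (n-1) ≤ v ^ n / v := by
        rcases n with _ | m
        · simp only [Nat.zero_sub, pow_zero, pow_zero, one_div]
          rw [one_le_inv₀ hv0]
          calc v ≤ 21/22 := hv1
            _ ≤ 1 := by norm_num
        · simp [pow_succ]
          rw [mul_div_assoc, div_self (ne_of_gt hv0), mul_one]
      calc 12 * ((n:ℝ)+1) * ((221:ℝ)/220) ^ (6*(n+1)) * v ^ (n-1)
          ≤ 12 * ((n:ℝ)+1) * q ^ (n+1) * (v ^ n / v) := by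
            rw [hbase]
            apply mul_le_mul_of_nonneg_left hvpow (by positivity)
        _ = (12 * q / v) * (((n:ℝ)+1) * (q*v)^n) := by
            rw [mul_pow]; field_simp; ring
    · apply Summable.mul_left
      have h1 : Summable (fun n : ℕ => (n:ℝ) * (q*v)^n) := by
        have := summable_pow_mul_geometric_of_norm_lt_one 1
          (r := q*v) (by rw [Real.norm_eq_abs, abs_of_nonneg hqv0]; exact hqv)
        simpa using this
      have h2 : Summable (fun n : ℕ => (q*v)^n) :=
        summable_geometric_of_lt_one hqv0 hqv
      have := h1.add h2
      apply Summable.congr this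
      intro n; ring

lemma exists_tail_lt_one : ∃ n0 : ℕ, 0 < n0 ∧ ∑' k, Wb (k + n0) < 1 := by
  have h := tendsto_sum_nat_add Wb
  have h2 : ∀ᶠ n0 in atTop, ∑' k, Wb (k + n0) < 1 := by
    apply Filter.Tendsto.eventually_lt_const one_pos h
  obtain ⟨n0, hn0⟩ := (h2.and (eventually_gt_atTop 0)).exists
  exact ⟨n0, hn0.2, hn0.1⟩

end Aux

/-- A continuous-time simple symmetric random walk `Z` on `ℤ` with total jump rate `2`
(built from a rate-`2` Poisson clock `N` and i.i.d. uniform `±1` steps `ξ`), run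
independently of two rate-`1` Poisson processes `X` and `Y`, stays strictly between the
receding boundaries `−1 − X_t` and `1 + Y_t` for all times with positive probability.
(The boundaries are the extreme occupied sites of the one-dimensional Richardson model.) -/
theorem ctrw_between_poisson_boundaries
    {Ω : Type*} [MeasurableSpace Ω] (μ : Measure Ω) [IsProbabilityMeasure μ]
    (N X Y : ℝ → Ω → ℕ) (ξ : ℕ → Ω → ℤ)
    (hN : IsPoissonProcess μ N 2)
    (hX : IsPoissonProcess μ X 1) (hY : IsPoissonProcess μ Y 1)
    (hξmeas : ∀ i, Measurable (ξ i))
    (hξdist : ∀ i, μ {ω | ξ i ω = 1} = 1 / 2 ∧ μ {ω | ξ i ω = -1} = 1 / 2)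
    (hindep : iIndepFun
      (m := fun i : ℕ ⊕ Fin 3 =>
        (Sum.rec (motive := fun i => MeasurableSpace (Sum.elim (fun _ : ℕ => ℤ)
            (fun _ : Fin 3 => ℝ → ℕ) i))
          (fun _ => (inferInstance : MeasurableSpace ℤ))
          (fun _ => (inferInstance : MeasurableSpace (ℝ → ℕ))) i))
      (fun i => Sum.rec (motive := fun i => Ω → Sum.elim (fun _ : ℕ => ℤ)
            (fun _ : Fin 3 => ℝ → ℕ) i)
        (fun n ω => ξ n ω)
        (fun j ω => fun t => (![N, X, Y] j) t ω) i) μ) :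
    0 < μ {ω | ∀ t : ℝ, 0 ≤ t →
      (-1 - (X t ω : ℤ) < ∑ i ∈ Finset.range (N t ω), ξ i ω ∧
        ∑ i ∈ Finset.range (N t ω), ξ i ω < 1 + (Y t ω : ℤ))} := by
  obtain ⟨hN0, hNmono, hNmeas, hNmap, hNinc⟩ := hN
  obtain ⟨hX0, hXmono, hXmeas, hXmap, _⟩ := hX
  obtain ⟨hY0, hYmono, hYmeas, hYmap, _⟩ := hY
  obtain ⟨n0, hn0pos, htail⟩ := exists_tail_lt_one
  -- the good initial event
  set E0 : Set Ω := {ω | N (n0 : ℝ) ω = 0} with hE0def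
  -- bad events at scale n = k + n0
  set B1 : ℕ → Set Ω := fun k =>
    {ω | 6*(k+n0+1) ≤ N ((k+n0+1 : ℕ) : ℝ) ω - N ((n0 : ℕ) : ℝ) ω} with hB1def
  set B2 : ℕ → Set Ω := fun k =>
    {ω | X ((k+n0 : ℕ) : ℝ) ω ≤ (k+n0)/2} with hB2def
  set B2' : ℕ → Set Ω := fun k =>
    {ω | Y ((k+n0 : ℕ) : ℝ) ω ≤ (k+n0)/2} with hB2'def
  set B3 : ℕ → Set Ω := fun k =>
    ⋃ j ∈ Finset.range (6*(k+n0+1)),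
      {ω | (((k+n0)/2 : ℕ) : ℤ) + 1 ≤ |∑ i ∈ Finset.range j, ξ i ω|} with hB3def
  set U : Set Ω := ⋃ k, (B1 k ∪ (B2 k ∪ (B2' k ∪ B3 k))) with hUdef
  -- Step 1: positivity of μ E0
  have hE0pos : 0 < μ E0 := by
    have hmap0 := hNmap 0 (n0:ℝ) le_rfl (Nat.cast_nonneg n0)
    have hfun : (fun ω => N (n0:ℝ) ω - N 0 ω) = fun ω => N (n0:ℝ) ω :=
      funext fun ω => by rw [hN0 ω, Nat.sub_zero]
    rw [hfun] at hmap0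
    have hmeasN : Measurable (N (n0:ℝ)) := hNmeas _ (Nat.cast_nonneg n0)
    have hE0eq : μ E0 = poissonMeasure (2 * ((n0:ℝ) - 0).toNNReal) {0} := by
      rw [← hmap0, Measure.map_apply hmeasN (measurableSet_singleton 0)]
      rfl
    rw [hE0eq, poissonMeasure_singleton]
    show 0 < ENNReal.ofReal (poissonPMFReal _ 0)
    rw [ENNReal.ofReal_pos]
    simp only [poissonPMFReal, pow_zero, Nat.factorial_zero, Nat.cast_one, mul_one, div_one]
    positivity
  have hE0top : μ E0 ≠ ∞ := by
    exact ne_top_of_le_ne_top (measure_ne_top μ _) (measure_mono (Set.subset_univ _))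
  -- Step 2: per-k bounds
  have hb1 : ∀ k, μ (E0 ∩ B1 k)
      ≤ μ E0 * ENNReal.ofReal (Real.exp ((2*Real.exp 1 - 8) * ((k+n0:ℕ)+1))) := by
    intro k
    set u : ℕ → ℝ := fun i => if i = 0 then 0 else if i = 1 then ((n0:ℕ):ℝ)
      else ((k+n0+1 : ℕ) : ℝ) with hudef
    have hu0 : u 0 = 0 := by simp [hudef]
    have hu1 : u 1 = ((n0:ℕ):ℝ) := by simp [hudef]
    have hu2 : u 2 = ((k+n0+1:ℕ):ℝ) := by simp [hudef]
    have humono : Monotone u := by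
      apply monotone_nat_of_le_succ
      intro i
      match i with
      | 0 => rw [hu0, hu1]; positivity
      | 1 => rw [hu1, hu2]; push_cast; linarith
      | (m+2) => simp [hudef]
    have hii := hNinc u hu0 humono
    have hpair := hii.indepFun (i := 0) (j := 1) (by norm_num)
    simp only [hu0, hu1, hu2] at hpair
    have key := hpair.measure_inter_preimage_eq_mul (s := {0})
      (t := {j : ℕ | 6*(k+n0+1) ≤ j})
      (measurableSet_singleton 0) ((Set.to_countable _).measurableSet)
    have hs1 : (fun ω => N ((n0:ℕ):ℝ) ω - N 0 ω) ⁻¹' {0} = E0 := by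
      ext ω
      simp [hE0def, hN0 ω]
    have hs2 : (fun ω => N ((k+n0+1:ℕ):ℝ) ω - N ((n0:ℕ):ℝ) ω) ⁻¹'
        {j | 6*(k+n0+1) ≤ j} = B1 k := rfl
    rw [hs1, hs2] at key
    rw [key]
    -- now bound μ (B1 k)
    have hcast : ((n0:ℕ):ℝ) ≤ ((k+n0+1:ℕ):ℝ) := by push_cast; linarith
    have hmapk := hNmap ((n0:ℕ):ℝ) ((k+n0+1:ℕ):ℝ) (Nat.cast_nonneg _) hcast
    have hmeas : Measurable (fun ω => N ((k+n0+1:ℕ):ℝ) ω - N ((n0:ℕ):ℝ) ω) :=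
      (hNmeas _ (Nat.cast_nonneg _)).sub (hNmeas _ (Nat.cast_nonneg _))
    have hB1eq : μ (B1 k) = poissonMeasure (2 * (((k+n0+1:ℕ):ℝ) - ((n0:ℕ):ℝ)).toNNReal)
        {j | 6*(k+n0+1) ≤ j} := by
      rw [← hmapk, Measure.map_apply hmeas ((Set.to_countable _).measurableSet)]
      rfl
    have hz1 : (1:ℝ) ≤ Real.exp 1 := Real.one_le_exp (by norm_num)
    have htb := poisson_ztail (2 * (((k+n0+1:ℕ):ℝ) - ((n0:ℕ):ℝ)).toNNReal) (Real.exp 1)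
      (Real.exp_pos 1) (6*(k+n0+1)) {j | 6*(k+n0+1) ≤ j}
      (fun j hj => pow_le_pow_right₀ hz1 hj)
    have hrcoe : ((2 * (((k+n0+1:ℕ):ℝ) - ((n0:ℕ):ℝ)).toNNReal : ℝ≥0) : ℝ)
        = 2*((k:ℝ)+1) := by
      push_cast
      rw [Real.coe_toNNReal _ (by push_cast; linarith)]
      push_cast
      ring
    have hreal : Real.exp ((2 * (((k+n0+1:ℕ):ℝ) - ((n0:ℕ):ℝ)).toNNReal : ℝ≥0)
          * (Real.exp 1 - 1)) / (Real.exp 1) ^ (6*(k+n0+1))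
        ≤ Real.exp ((2*Real.exp 1 - 8) * ((k+n0:ℕ)+1)) := by
      rw [hrcoe, ← Real.exp_nat_mul, ← Real.exp_sub]
      apply Real.exp_le_exp.mpr
      push_cast
      nlinarith [hz1]
    calc μ E0 * μ (B1 k)
        ≤ μ E0 * ENNReal.ofReal (Real.exp ((2 * (((k+n0+1:ℕ):ℝ) - ((n0:ℕ):ℝ)).toNNReal : ℝ≥0)
            * (Real.exp 1 - 1)) / (Real.exp 1) ^ (6*(k+n0+1))) := by
          apply mul_le_mul_right
          rw [hB1eq]
          exact htb
      _ ≤ _ := by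
          apply mul_le_mul_right
          exact ENNReal.ofReal_le_ofReal hreal
  have hb2gen : ∀ (W : ℝ → Ω → ℕ) (jW : Fin 3) (hJ : jW ≠ 0)
      (hWeq : ![N, X, Y] jW = W)
      (hWmono : ∀ ω, ∀ s t : ℝ, 0 ≤ s → s ≤ t → W s ω ≤ W t ω)
      (hWmeas : ∀ t : ℝ, 0 ≤ t → Measurable (W t))
      (hWmap : ∀ s t : ℝ, 0 ≤ s → s ≤ t →
        Measure.map (fun ω => W t ω - W s ω) μ = poissonMeasure (1 * (t - s).toNNReal))
      (hW0 : ∀ ω, W 0 ω = 0) (k : ℕ),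
      μ (E0 ∩ {ω | W ((k+n0 : ℕ) : ℝ) ω ≤ (k+n0)/2})
      ≤ μ E0 * ENNReal.ofReal (Real.exp ((Real.exp (-1) - 1/2) * (k+n0:ℕ))) := by
    intro W jW hJ hWeq hWmono hWmeas hWmap hW0 k
    have hne : (Sum.inr 0 : ℕ ⊕ Fin 3) ≠ Sum.inr jW := by
      simp [hJ.symm]
    have hpair := hindep.indepFun hne
    have key := hpair.measure_inter_preimage_eq_mul
      (s := (fun g : ℝ → ℕ => g ((n0:ℕ):ℝ)) ⁻¹' {0})
      (t := (fun g : ℝ → ℕ => g ((k+n0:ℕ):ℝ)) ⁻¹' {j : ℕ | j ≤ (k+n0)/2})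
      (measurable_pi_apply _ (measurableSet_singleton 0))
      (measurable_pi_apply _ ((Set.to_countable _).measurableSet))
    have hs1 : (fun ω => fun t => (![N, X, Y] (0: Fin 3)) t ω) ⁻¹'
        ((fun g : ℝ → ℕ => g ((n0:ℕ):ℝ)) ⁻¹' {0}) = E0 := by
      ext ω
      simp [hE0def, Matrix.cons_val_zero]
    have hs2 : (fun ω => fun t => (![N, X, Y] jW) t ω) ⁻¹'
        ((fun g : ℝ → ℕ => g ((k+n0:ℕ):ℝ)) ⁻¹' {j : ℕ | j ≤ (k+n0)/2})
        = {ω | W ((k+n0 : ℕ) : ℝ) ω ≤ (k+n0)/2} := by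
      rw [hWeq]
      rfl
    erw [hs1, hs2] at key
    rw [key]
    -- bound the W event
    have hmapk := hWmap 0 ((k+n0:ℕ):ℝ) le_rfl (Nat.cast_nonneg _)
    have hfun : (fun ω => W ((k+n0:ℕ):ℝ) ω - W 0 ω) = fun ω => W ((k+n0:ℕ):ℝ) ω :=
      funext fun ω => by rw [hW0 ω, Nat.sub_zero]
    rw [hfun] at hmapk
    have hWeq2 : μ {ω | W ((k+n0 : ℕ) : ℝ) ω ≤ (k+n0)/2}
        = poissonMeasure (1 * (((k+n0:ℕ):ℝ) - 0).toNNReal) {j : ℕ | j ≤ (k+n0)/2} := by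
      rw [← hmapk, Measure.map_apply (hWmeas _ (Nat.cast_nonneg _))
        ((Set.to_countable _).measurableSet)]
      rfl
    have hzpos : (0:ℝ) < Real.exp (-1) := Real.exp_pos _
    have hzle1 : Real.exp (-1) ≤ 1 := Real.exp_le_one_iff.mpr (by norm_num)
    have htb := poisson_ztail (1 * (((k+n0:ℕ):ℝ) - 0).toNNReal) (Real.exp (-1))
      hzpos ((k+n0)/2) {j : ℕ | j ≤ (k+n0)/2}
      (fun j hj => pow_le_pow_of_le_one hzpos.le hzle1 hj)
    have hrcoe : ((1 * (((k+n0:ℕ):ℝ) - 0).toNNReal : ℝ≥0) : ℝ) = ((k+n0:ℕ):ℝ) := by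
      push_cast
      rw [Real.coe_toNNReal _ (by rw [sub_zero]; positivity)]
      ring
    have hreal : Real.exp ((1 * (((k+n0:ℕ):ℝ) - 0).toNNReal : ℝ≥0)
          * (Real.exp (-1) - 1)) / (Real.exp (-1)) ^ ((k+n0)/2)
        ≤ Real.exp ((Real.exp (-1) - 1/2) * (k+n0:ℕ)) := by
      rw [hrcoe, ← Real.exp_nat_mul, ← Real.exp_sub]
      apply Real.exp_le_exp.mpr
      have hfloor : (((k+n0)/2 : ℕ) : ℝ) ≤ ((k+n0:ℕ):ℝ)/2 := by
        have := Nat.cast_div_le (α := ℝ) (m := k+n0) (n := 2)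
        simpa using this
      nlinarith [Nat.cast_nonneg (α := ℝ) (k+n0)]
    calc μ E0 * μ {ω | W ((k+n0 : ℕ) : ℝ) ω ≤ (k+n0)/2}
        ≤ μ E0 * ENNReal.ofReal (Real.exp ((1 * (((k+n0:ℕ):ℝ) - 0).toNNReal : ℝ≥0)
            * (Real.exp (-1) - 1)) / (Real.exp (-1)) ^ ((k+n0)/2)) := by
          apply mul_le_mul_right
          rw [hWeq2]
          exact htb
      _ ≤ _ := by
          apply mul_le_mul_right
          exact ENNReal.ofReal_le_ofReal hreal
  have hb2 : ∀ k, μ (E0 ∩ B2 k)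
      ≤ μ E0 * ENNReal.ofReal (Real.exp ((Real.exp (-1) - 1/2) * (k+n0:ℕ))) := by
    intro k
    exact hb2gen X 1 (by norm_num) (by simp) hXmono hXmeas hXmap hX0 k
  have hb2' : ∀ k, μ (E0 ∩ B2' k)
      ≤ μ E0 * ENNReal.ofReal (Real.exp ((Real.exp (-1) - 1/2) * (k+n0:ℕ))) := by
    intro k
    exact hb2gen Y 2 (by decide) (by simp) hYmono hYmeas hYmap hY0 k
  have hnull : ∀ i : ℕ, μ {ω | ξ i ω ≠ 1 ∧ ξ i ω ≠ -1} = 0 := by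
    intro i
    have hA : MeasurableSet {ω | ξ i ω = 1} := by
      have : {ω | ξ i ω = 1} = ξ i ⁻¹' {1} := by ext ω; simp
      rw [this]; exact hξmeas i (measurableSet_singleton _)
    have hB : MeasurableSet {ω | ξ i ω = -1} := by
      have : {ω | ξ i ω = -1} = ξ i ⁻¹' {-1} := by ext ω; simp
      rw [this]; exact hξmeas i (measurableSet_singleton _)
    have hdisj : Disjoint {ω | ξ i ω = 1} {ω | ξ i ω = -1} := by
      rw [Set.disjoint_left]
      intro ω h1 h2
      simp only [Set.mem_setOf_eq] at h1 h2
      rw [h1] at h2; norm_num at h2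
    have hunion : μ ({ω | ξ i ω = 1} ∪ {ω | ξ i ω = -1}) = 1 := by
      rw [measure_union hdisj hB, (hξdist i).1, (hξdist i).2]
      rw [← ENNReal.inv_two_add_inv_two]
      simp [one_div]
    have hcompl : {ω | ξ i ω ≠ 1 ∧ ξ i ω ≠ -1} = ({ω | ξ i ω = 1} ∪ {ω | ξ i ω = -1})ᶜ := by
      ext ω; simp [not_or]
    rw [hcompl, measure_compl (hA.union hB) (measure_ne_top μ _), hunion,
      measure_univ, tsub_self]
  have hb3 : ∀ k, μ (E0 ∩ B3 k)
      ≤ μ E0 * ENNReal.ofReal (12 * ((k+n0:ℕ)+1) * ((221:ℝ)/220) ^ (6*((k+n0:ℕ)+1))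
          * (Real.sqrt (10/11)) ^ ((k+n0:ℕ)-1)) := by
    intro k
    set n : ℕ := k + n0 with hndef
    set cn : ℕ := n/2 + 1 with hcndef
    -- atom probabilities
    have hatom : ∀ (j : ℕ) (s : Finset ℕ),
        μ (E0 ∩ ⋂ i ∈ Finset.range j, ξ i ⁻¹' {if i ∈ s then (1:ℤ) else -1})
          = μ E0 * (1/2 : ℝ≥0∞)^j := by
      intro j s
      classical
      set sets : ∀ i : ℕ ⊕ Fin 3, Set (Sum.elim (fun _ : ℕ => ℤ) (fun _ : Fin 3 => ℝ → ℕ) i) :=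
        fun i => Sum.rec (motive := fun i => Set (Sum.elim (fun _ : ℕ => ℤ)
            (fun _ : Fin 3 => ℝ → ℕ) i))
          (fun m => ({if m ∈ s then (1:ℤ) else -1} : Set ℤ))
          (fun f => if f = 0 then ((fun g : ℝ → ℕ => g ((n0:ℕ):ℝ)) ⁻¹' {0}) else Set.univ) i
        with hsetsdef
      have key := hindep.measure_inter_preimage_eq_mul
        (S := insert (Sum.inr (0:Fin 3)) ((Finset.range j).image Sum.inl)) (sets := sets)
        (by
          rintro (m | f) _
          · show MeasurableSet (α := ℤ) ({if m ∈ s then (1:ℤ) else -1} : Set ℤ)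
            exact measurableSet_singleton _
          · simp only [hsetsdef]
            split
            · exact measurable_pi_apply _ (measurableSet_singleton 0)
            · exact MeasurableSet.univ)
      have hnotmem : (Sum.inr (0:Fin 3) : ℕ ⊕ Fin 3) ∉ (Finset.range j).image Sum.inl := by
        simp
      have hLHS : (⋂ i ∈ insert (Sum.inr (0:Fin 3)) ((Finset.range j).image Sum.inl),
          (fun i => Sum.rec (motive := fun i => Ω → Sum.elim (fun _ : ℕ => ℤ)
            (fun _ : Fin 3 => ℝ → ℕ) i)
            (fun n ω => ξ n ω)
            (fun j ω => fun t => (![N, X, Y] j) t ω) i) i ⁻¹' sets i)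
          = E0 ∩ ⋂ i ∈ Finset.range j, ξ i ⁻¹' {if i ∈ s then (1:ℤ) else -1} := by
        ext ω
        simp only [Set.mem_iInter, Finset.mem_insert, Finset.mem_image, Finset.mem_range,
          Set.mem_inter_iff, Set.mem_preimage]
        constructor
        · intro h
          constructor
          · have h0 := h (Sum.inr 0) (Or.inl rfl)
            exact h0
          · intro m hm
            exact h (Sum.inl m) (Or.inr ⟨m, hm, rfl⟩)
        · rintro ⟨h0, h1⟩ i hi
          rcases hi with hi | ⟨m, hm, rfl⟩
          · subst hi
            exact h0
          · exact h1 m hm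
      have hRHS : (∏ i ∈ insert (Sum.inr (0:Fin 3)) ((Finset.range j).image Sum.inl),
          μ ((fun i => Sum.rec (motive := fun i => Ω → Sum.elim (fun _ : ℕ => ℤ)
            (fun _ : Fin 3 => ℝ → ℕ) i)
            (fun n ω => ξ n ω)
            (fun j ω => fun t => (![N, X, Y] j) t ω) i) i ⁻¹' sets i))
          = μ E0 * (1/2 : ℝ≥0∞)^j := by
        rw [Finset.prod_insert hnotmem]
        congr 1
        rw [Finset.prod_image (fun x _ y _ h => Sum.inl.inj h)]
        have h2 : ∀ m ∈ Finset.range j,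
            μ ((fun ω => ξ m ω) ⁻¹' ({if m ∈ s then (1:ℤ) else -1} : Set ℤ))
            = (1/2 : ℝ≥0∞) := by
          intro m _
          by_cases hms : m ∈ s
          · rw [if_pos hms]
            have : (fun ω => ξ m ω) ⁻¹' ({(1:ℤ)} : Set ℤ) = {ω | ξ m ω = 1} := by
              ext ω; simp
            rw [this, (hξdist m).1]
          · rw [if_neg hms]
            have : (fun ω => ξ m ω) ⁻¹' ({(-1:ℤ)} : Set ℤ) = {ω | ξ m ω = -1} := by
              ext ω; simp
            rw [this, (hξdist m).2]
        exact (Finset.prod_congr rfl h2).trans (by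
          rw [Finset.prod_const, Finset.card_range])
      rw [hLHS, hRHS] at key
      exact key
    -- per-j bound
    have hperj : ∀ j : ℕ, μ (E0 ∩ {ω | ((n/2 : ℕ) : ℤ) + 1 ≤ |∑ i ∈ Finset.range j, ξ i ω|})
        ≤ μ E0 * ENNReal.ofReal (2 * (((11/10:ℝ)^2+1)/(2*(11/10)))^j / (11/10:ℝ)^cn) := by
      intro j
      classical
      set badS : Finset (Finset ℕ) := (Finset.range j).powerset.filter
        (fun s => ((cn : ℕ) : ℤ) ≤ |2*(s.card:ℤ) - j|) with hbadSdef
      have hcover : E0 ∩ {ω | ((n/2 : ℕ) : ℤ) + 1 ≤ |∑ i ∈ Finset.range j, ξ i ω|}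
          ⊆ (⋃ i ∈ Finset.range j, {ω | ξ i ω ≠ 1 ∧ ξ i ω ≠ -1})
            ∪ ⋃ s ∈ badS, (E0 ∩ ⋂ i ∈ Finset.range j, ξ i ⁻¹' {if i ∈ s then (1:ℤ) else -1}) := by
        rintro ω ⟨hω0, hωs⟩
        by_cases hgood : ∀ i < j, ξ i ω = 1 ∨ ξ i ω = -1
        · right
          set s : Finset ℕ := (Finset.range j).filter (fun i => ξ i ω = 1) with hsdef
          have hssub : s ⊆ Finset.range j := Finset.filter_subset _ _
          have hsum : ∑ i ∈ Finset.range j, ξ i ω = 2*(s.card:ℤ) - j := by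
            have hpt : ∀ i ∈ Finset.range j,
                ξ i ω = (if i ∈ s then (2:ℤ) else 0) - 1 := by
              intro i hi
              rcases hgood i (Finset.mem_range.mp hi) with h1 | h1
              · rw [h1, if_pos (Finset.mem_filter.mpr ⟨hi, h1⟩)]; norm_num
              · rw [h1, if_neg ?_]
                · norm_num
                · intro hmem
                  have := (Finset.mem_filter.mp hmem).2
                  rw [h1] at this; norm_num at this
            rw [Finset.sum_congr rfl hpt, Finset.sum_sub_distrib]
            rw [Finset.sum_ite_mem, Finset.inter_eq_right.mpr hssub]
            rw [Finset.sum_const, Finset.sum_const, Finset.card_range]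
            push_cast
            ring
          refine Set.mem_iUnion₂.mpr ⟨s, ?_, hω0, ?_⟩
          · rw [hbadSdef, Finset.mem_filter]
            refine ⟨Finset.mem_powerset.mpr hssub, ?_⟩
            rw [← hsum]
            rw [Set.mem_setOf_eq] at hωs
            calc ((cn : ℕ) : ℤ) = ((n/2 : ℕ) : ℤ) + 1 := by rw [hcndef]; push_cast; ring
              _ ≤ _ := hωs
          · refine Set.mem_iInter.mpr fun i => Set.mem_iInter.mpr fun hi => ?_
            rcases hgood i (Finset.mem_range.mp hi) with h1 | h1
            · have : i ∈ s := Finset.mem_filter.mpr ⟨hi, h1⟩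
              simp [this, h1]
            · have : i ∉ s := by
                intro hmem
                have := (Finset.mem_filter.mp hmem).2
                rw [h1] at this; norm_num at this
              simp [this, h1]
        · left
          push_neg at hgood
          obtain ⟨i, hij, hi1, hi2⟩ := hgood
          exact Set.mem_iUnion₂.mpr ⟨i, Finset.mem_range.mpr hij, hi1, hi2⟩
      calc μ (E0 ∩ {ω | ((n/2 : ℕ) : ℤ) + 1 ≤ |∑ i ∈ Finset.range j, ξ i ω|})
          ≤ μ ((⋃ i ∈ Finset.range j, {ω | ξ i ω ≠ 1 ∧ ξ i ω ≠ -1})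
            ∪ ⋃ s ∈ badS, (E0 ∩ ⋂ i ∈ Finset.range j, ξ i ⁻¹' {if i ∈ s then (1:ℤ) else -1})) :=
            measure_mono hcover
        _ ≤ μ (⋃ i ∈ Finset.range j, {ω | ξ i ω ≠ 1 ∧ ξ i ω ≠ -1})
            + μ (⋃ s ∈ badS, (E0 ∩ ⋂ i ∈ Finset.range j, ξ i ⁻¹' {if i ∈ s then (1:ℤ) else -1})) :=
            measure_union_le _ _
        _ ≤ 0 + ∑ s ∈ badS, μ (E0 ∩ ⋂ i ∈ Finset.range j, ξ i ⁻¹' {if i ∈ s then (1:ℤ) else -1}) := by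
            apply add_le_add
            · calc μ (⋃ i ∈ Finset.range j, {ω | ξ i ω ≠ 1 ∧ ξ i ω ≠ -1})
                  ≤ ∑ i ∈ Finset.range j, μ {ω | ξ i ω ≠ 1 ∧ ξ i ω ≠ -1} :=
                    measure_biUnion_finset_le _ _
                _ = 0 := by
                    rw [Finset.sum_congr rfl (fun i _ => hnull i), Finset.sum_const,
                      smul_zero]
            · exact measure_biUnion_finset_le _ _
        _ = (badS.card : ℝ≥0∞) * (μ E0 * (1/2 : ℝ≥0∞)^j) := by
            rw [zero_add, Finset.sum_congr rfl (fun s _ => hatom j s), Finset.sum_const,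
              nsmul_eq_mul]
        _ ≤ μ E0 * ENNReal.ofReal (2 * (((11/10:ℝ)^2+1)/(2*(11/10)))^j / (11/10:ℝ)^cn) := by
            rw [mul_comm (badS.card : ℝ≥0∞) _, mul_assoc]
            apply mul_le_mul_right
            have hhalf : (1/2 : ℝ≥0∞) = ENNReal.ofReal (1/2:ℝ) := by
              rw [ENNReal.ofReal_div_of_pos (by norm_num), ENNReal.ofReal_one,
                ENNReal.ofReal_ofNat]
            have h12 : (1/2 : ℝ≥0∞)^j * (badS.card : ℝ≥0∞)
                = ENNReal.ofReal ((badS.card : ℝ) * (1/2 : ℝ)^j) := by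
              rw [hhalf, ← ENNReal.ofReal_pow (by norm_num : (0:ℝ) ≤ 1/2),
                ← ENNReal.ofReal_natCast badS.card, ← ENNReal.ofReal_mul (by positivity)]
              try rw [mul_comm]
            rw [h12]
            apply ENNReal.ofReal_le_ofReal
            exact walk_count j cn (11/10) (by norm_num)
    -- sum over j
    have hsplitB3 : E0 ∩ B3 k = ⋃ j ∈ Finset.range (6*(n+1)),
        (E0 ∩ {ω | ((n/2 : ℕ) : ℤ) + 1 ≤ |∑ i ∈ Finset.range j, ξ i ω|}) := by
      rw [hB3def]
      rw [Set.inter_iUnion₂]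
    rw [hsplitB3]
    calc μ (⋃ j ∈ Finset.range (6*(n+1)),
          (E0 ∩ {ω | ((n/2 : ℕ) : ℤ) + 1 ≤ |∑ i ∈ Finset.range j, ξ i ω|}))
        ≤ ∑ j ∈ Finset.range (6*(n+1)),
            μ (E0 ∩ {ω | ((n/2 : ℕ) : ℤ) + 1 ≤ |∑ i ∈ Finset.range j, ξ i ω|}) :=
          measure_biUnion_finset_le _ _
      _ ≤ ∑ j ∈ Finset.range (6*(n+1)),
            μ E0 * ENNReal.ofReal (2 * (((11/10:ℝ)^2+1)/(2*(11/10)))^j / (11/10:ℝ)^cn) :=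
          Finset.sum_le_sum (fun j _ => hperj j)
      _ ≤ ∑ j ∈ Finset.range (6*(n+1)),
            μ E0 * ENNReal.ofReal (2 * ((221:ℝ)/220)^(6*(n+1)) / (11/10:ℝ)^cn) := by
          apply Finset.sum_le_sum
          intro j hj
          apply mul_le_mul_right
          apply ENNReal.ofReal_le_ofReal
          apply div_le_div_of_nonneg_right ?_ (by positivity)
          have hq0 : (((11/10:ℝ)^2+1)/(2*(11/10))) = (221:ℝ)/220 := by norm_num
          rw [hq0]
          have : (1:ℝ) ≤ (221:ℝ)/220 := by norm_num
          apply mul_le_mul_of_nonneg_left _ (by norm_num)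
          exact pow_le_pow_right₀ this (le_of_lt (Finset.mem_range.mp hj))
      _ = (6*(n+1) : ℕ) * (μ E0 * ENNReal.ofReal (2 * ((221:ℝ)/220)^(6*(n+1)) / (11/10:ℝ)^cn)) := by
          rw [Finset.sum_const, Finset.card_range, nsmul_eq_mul]
      _ ≤ μ E0 * ENNReal.ofReal (12 * ((n:ℕ)+1) * ((221:ℝ)/220) ^ (6*((n:ℕ)+1))
          * (Real.sqrt (10/11)) ^ ((n:ℕ)-1)) := by
          rw [← mul_assoc, mul_comm ((6*(n+1):ℕ) : ℝ≥0∞) (μ E0), mul_assoc]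
          apply mul_le_mul_right
          have hc : ((6*(n+1):ℕ) : ℝ≥0∞) = ENNReal.ofReal ((6*(n+1):ℕ) : ℝ) := by
            rw [ENNReal.ofReal_natCast]
          rw [hc, ← ENNReal.ofReal_mul (by positivity)]
          apply ENNReal.ofReal_le_ofReal
          -- pure real inequality
          set v : ℝ := Real.sqrt (10/11) with hvdef
          have hv0 : 0 < v := Real.sqrt_pos.mpr (by norm_num)
          have hv1 : v ≤ 1 := by
            rw [hvdef]
            rw [show (1:ℝ) = Real.sqrt 1 by rw [Real.sqrt_one]]
            exact Real.sqrt_le_sqrt (by norm_num)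
          have hvsq : v^2 = 10/11 := Real.sq_sqrt (by norm_num)
          have hinv : ((11/10:ℝ)^cn)⁻¹ ≤ v^(n-1) := by
            have h1 : ((11/10:ℝ)^cn)⁻¹ = (10/11:ℝ)^cn := by
              rw [← inv_pow]
              norm_num
            rw [h1, hcndef]
            calc (10/11:ℝ)^(n/2+1) ≤ (10/11:ℝ)^(n/2) := by
                  rw [pow_succ]
                  nlinarith [pow_nonneg (show (0:ℝ) ≤ 10/11 by norm_num) (n/2)]
              _ = v^(2*(n/2)) := by rw [pow_mul, hvsq]
              _ ≤ v^(n-1) := pow_le_pow_of_le_one hv0.le hv1 (by omega)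
          calc ((6*(n+1):ℕ) : ℝ) * (2 * ((221:ℝ)/220)^(6*(n+1)) / (11/10:ℝ)^cn)
              = (12 * ((n:ℕ)+1) * ((221:ℝ)/220)^(6*(n+1))) * ((11/10:ℝ)^cn)⁻¹ := by
                push_cast
                ring
            _ ≤ (12 * ((n:ℕ)+1) * ((221:ℝ)/220)^(6*(n+1))) * v^(n-1) := by
                apply mul_le_mul_of_nonneg_left hinv (by positivity)
            _ = 12 * ((n:ℕ)+1) * ((221:ℝ)/220) ^ (6*((n:ℕ)+1)) * v ^ ((n:ℕ)-1) := by ring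

  -- Step 3: total bound
  have hUbound : μ (E0 ∩ U) < μ E0 := by
    have hperk : ∀ k, μ (E0 ∩ (B1 k ∪ (B2 k ∪ (B2' k ∪ B3 k))))
        ≤ μ E0 * ENNReal.ofReal (Wb (k+n0)) := by
      intro k
      have hs : μ (E0 ∩ (B1 k ∪ (B2 k ∪ (B2' k ∪ B3 k))))
          ≤ μ (E0 ∩ B1 k) + (μ (E0 ∩ B2 k) + (μ (E0 ∩ B2' k) + μ (E0 ∩ B3 k))) := by
        calc μ (E0 ∩ (B1 k ∪ (B2 k ∪ (B2' k ∪ B3 k))))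
            = μ ((E0 ∩ B1 k) ∪ ((E0 ∩ B2 k) ∪ ((E0 ∩ B2' k) ∪ (E0 ∩ B3 k)))) := by
              rw [← Set.inter_union_distrib_left, ← Set.inter_union_distrib_left,
                ← Set.inter_union_distrib_left]
          _ ≤ μ (E0 ∩ B1 k) + μ ((E0 ∩ B2 k) ∪ ((E0 ∩ B2' k) ∪ (E0 ∩ B3 k))) :=
              measure_union_le _ _
          _ ≤ μ (E0 ∩ B1 k) + (μ (E0 ∩ B2 k) + μ ((E0 ∩ B2' k) ∪ (E0 ∩ B3 k))) := by
              apply add_le_add_right (measure_union_le _ _)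
          _ ≤ μ (E0 ∩ B1 k) + (μ (E0 ∩ B2 k) + (μ (E0 ∩ B2' k) + μ (E0 ∩ B3 k))) := by
              apply add_le_add_right
              apply add_le_add_right (measure_union_le _ _)
      refine hs.trans ?_
      have := add_le_add (hb1 k) (add_le_add (hb2 k) (add_le_add (hb2' k) (hb3 k)))
      refine this.trans ?_
      rw [← mul_add, ← mul_add, ← mul_add]
      apply mul_le_mul_right
      rw [← ENNReal.ofReal_add (by positivity) (by positivity),
        ← ENNReal.ofReal_add (by positivity) (by positivity),
        ← ENNReal.ofReal_add (by positivity) (by positivity)]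
      apply ENNReal.ofReal_le_ofReal
      rw [Wb]
      push_cast
      ring_nf
      exact le_refl _
    have hUsub : μ (E0 ∩ U) ≤ ∑' k, μ (E0 ∩ (B1 k ∪ (B2 k ∪ (B2' k ∪ B3 k)))) := by
      rw [hUdef, Set.inter_iUnion]
      exact measure_iUnion_le _
    have hsummable : Summable (fun k => Wb (k + n0)) :=
      (summable_nat_add_iff n0).mpr summable_Wb
    calc μ (E0 ∩ U) ≤ ∑' k, μ (E0 ∩ (B1 k ∪ (B2 k ∪ (B2' k ∪ B3 k)))) := hUsub
      _ ≤ ∑' k, μ E0 * ENNReal.ofReal (Wb (k+n0)) := ENNReal.tsum_le_tsum hperk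
      _ = μ E0 * ∑' k, ENNReal.ofReal (Wb (k+n0)) := ENNReal.tsum_mul_left
      _ = μ E0 * ENNReal.ofReal (∑' k, Wb (k+n0)) := by
          rw [ENNReal.ofReal_tsum_of_nonneg (fun k => Wb_nonneg _) hsummable]
      _ < μ E0 * 1 := by
          apply ENNReal.mul_right_strictMono (ne_of_gt hE0pos) hE0top
          exact ENNReal.ofReal_lt_one.mpr htail
      _ = μ E0 := mul_one _
  -- Step 4: deterministic inclusion
  have hincl : E0 \ U ⊆ {ω | ∀ t : ℝ, 0 ≤ t →
      (-1 - (X t ω : ℤ) < ∑ i ∈ Finset.range (N t ω), ξ i ω ∧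
        ∑ i ∈ Finset.range (N t ω), ξ i ω < 1 + (Y t ω : ℤ))} := by
    rintro ω ⟨hω0, hωU⟩
    have hω0' : N ((n0:ℕ):ℝ) ω = 0 := hω0
    have hnot : ∀ k, ω ∉ B1 k ∧ ω ∉ B2 k ∧ ω ∉ B2' k ∧ ω ∉ B3 k := by
      intro k
      have hmem : ω ∉ B1 k ∪ (B2 k ∪ (B2' k ∪ B3 k)) := fun hmem =>
        hωU (Set.mem_iUnion.mpr ⟨k, hmem⟩)
      simp only [Set.mem_union, not_or] at hmem
      exact ⟨hmem.1, hmem.2.1, hmem.2.2.1, hmem.2.2.2⟩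
    intro t ht
    set n : ℕ := ⌊t⌋.toNat with hndef
    have hn1 : ((n:ℕ):ℝ) ≤ t := by
      rw [hndef]
      have h1 : ((⌊t⌋.toNat : ℤ):ℝ) ≤ t := by
        rw [Int.toNat_of_nonneg (Int.floor_nonneg.mpr ht)]
        exact Int.floor_le t
      exact_mod_cast h1
    have hn2 : t ≤ ((n:ℕ):ℝ) + 1 := by
      have h1 : t < ((⌊t⌋.toNat:ℤ):ℝ) + 1 := by
        rw [Int.toNat_of_nonneg (Int.floor_nonneg.mpr ht)]
        exact Int.lt_floor_add_one t
      rw [hndef]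
      push_cast at h1 ⊢
      linarith
    by_cases hcase : n + 1 ≤ n0
    · -- small t: N t ω = 0
      have hle : N t ω ≤ N ((n0:ℕ):ℝ) ω := by
        apply hNmono ω t _ ht
        calc t ≤ ((n:ℕ):ℝ) + 1 := hn2
          _ ≤ ((n0:ℕ):ℝ) := by exact_mod_cast Nat.cast_le.mpr hcase
      rw [hω0'] at hle
      have hNt : N t ω = 0 := Nat.le_zero.mp hle
      rw [hNt]
      simp only [Finset.range_zero, Finset.sum_empty]
      constructor
      · have : (0:ℤ) ≤ (X t ω : ℤ) := Int.ofNat_nonneg _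
        omega
      · have : (0:ℤ) ≤ (Y t ω : ℤ) := Int.ofNat_nonneg _
        omega
    · -- large t
      push_neg at hcase
      obtain ⟨k, hkn⟩ : ∃ k, k + n0 = n := ⟨n - n0, by omega⟩
      obtain ⟨hg1, hg2, hg2', hg3⟩ := hnot k
      rw [hB1def] at hg1
      rw [hB2def] at hg2
      rw [hB2'def] at hg2'
      rw [hB3def] at hg3
      simp only [Set.mem_setOf_eq, not_le] at hg1 hg2 hg2'
      simp only [Set.mem_iUnion, Finset.mem_range, Set.mem_setOf_eq, not_exists, not_le] at hg3
      rw [hkn] at hg1 hg2 hg2'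
      simp only [hkn] at hg3
      rw [hω0', Nat.sub_zero] at hg1
      -- N t ω < 6*(n+1)
      have hNle : N t ω ≤ N ((n+1:ℕ):ℝ) ω := by
        apply hNmono ω t _ ht
        calc t ≤ ((n:ℕ):ℝ) + 1 := hn2
          _ = ((n+1:ℕ):ℝ) := by push_cast; ring
      have hNlt : N t ω < 6*(n+1) := lt_of_le_of_lt hNle hg1
      -- walk bound at j = N t ω
      have hg3j := hg3 (N t ω) hNlt
      have habs := Int.lt_add_one_iff.mp hg3j
      obtain ⟨hlo, hhi⟩ := abs_le.mp habs
      -- X, Y bounds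
      have hXt : n/2 + 1 ≤ X t ω := by
        have h1 : X ((n:ℕ):ℝ) ω ≤ X t ω := hXmono ω _ t (Nat.cast_nonneg n) hn1
        omega
      have hYt : n/2 + 1 ≤ Y t ω := by
        have h1 : Y ((n:ℕ):ℝ) ω ≤ Y t ω := hYmono ω _ t (Nat.cast_nonneg n) hn1
        omega
      constructor
      · have hx : ((n/2 : ℕ):ℤ) + 1 ≤ (X t ω : ℤ) := by exact_mod_cast hXt
        omega
      · have hy : ((n/2 : ℕ):ℤ) + 1 ≤ (Y t ω : ℤ) := by exact_mod_cast hYt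
        omega
  -- conclude
  have hsplit : μ E0 ≤ μ (E0 ∩ U) + μ (E0 \ U) := measure_le_inter_add_diff μ E0 U
  have hpos : 0 < μ (E0 \ U) := by
    by_contra h
    push_neg at h
    have h0 : μ (E0 \ U) = 0 := le_antisymm h zero_le
    rw [h0, add_zero] at hsplit
    exact absurd (lt_of_le_of_lt hsplit hUbound) (lt_irrefl _)
  exact lt_of_lt_of_le hpos (measure_mono hincl)
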